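/- Let r be a prime with r ≥ 5 and r ≠ 7, and let ζ ∈ ℂ be a primitive r-th root of unity. Define τ_B = Σ_{n=0}^{r−2} ζ^{−n(n+2)} · (1 + ζ + ⋯ + ζ^n) · Π_{j=n+2}^{2n+1} (1 − ζ^j), an element of ℤ[ζ]. Then for every integer v there is no y ∈ ℤ[ζ] with τ_B − ζ^v·conj(τ_B) = r·y, where conj denotes complex conjugation. -/

import Mathlib

set_option maxRecDepth 8000
set_option maxHeartbeats 1000000

open Finset Polynomial

-- expansion of the tau sum mod (1-μ)^4, for any μ with μ^r = 1, μ ≠ 0, r ≥ 5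
lemma tau_exp (r : ℕ) (hr5 : 5 ≤ r) (μ : ℂ) (hμ0 : μ ≠ 0) (hμr : μ ^ r = 1) :
    ∃ g ∈ Subring.closure ({μ} : Set ℂ),
      (∑ n ∈ Finset.range (r - 1), μ ^ (-((n : ℤ) * ((n : ℤ) + 2))) *
          (∑ k ∈ Finset.range (n + 1), μ ^ k) *
          ∏ j ∈ Finset.Icc (n + 2) (2 * n + 1), (1 - μ ^ j))
      = 1 + 6*(1-μ) + 69*(1-μ)^2 + 1064*(1-μ)^3 + (1-μ)^4 * g := by
  set R := Subring.closure ({μ} : Set ℂ) with hR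
  have hμR : μ ∈ R := Subring.subset_closure (Set.mem_singleton μ)
  have hinv : μ⁻¹ = μ ^ (r - 1) :=
    inv_eq_of_mul_eq_one_right (by
      rw [← pow_succ', Nat.sub_add_cancel (by omega)]; exact hμr)
  have hinvR : μ⁻¹ ∈ R := by rw [hinv]; exact Subring.pow_mem R hμR _
  have hzpow : ∀ n : ℕ, μ ^ (-((n : ℤ) * ((n : ℤ) + 2))) = (μ⁻¹) ^ (n * (n + 2)) := by
    intro n
    rw [show (-((n : ℤ) * ((n : ℤ) + 2))) = -((n * (n+2) : ℕ) : ℤ) by push_cast; ring,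
      zpow_neg, zpow_natCast, inv_pow]
  have hsum_eq : (∑ n ∈ Finset.range (r - 1), μ ^ (-((n : ℤ) * ((n : ℤ) + 2))) *
          (∑ k ∈ Finset.range (n + 1), μ ^ k) *
          ∏ j ∈ Finset.Icc (n + 2) (2 * n + 1), (1 - μ ^ j))
      = ∑ n ∈ Finset.range (r - 1), (μ⁻¹) ^ (n * (n + 2)) *
          (∑ k ∈ Finset.range (n + 1), μ ^ k) *
          ∏ j ∈ Finset.Icc (n + 2) (2 * n + 1), (1 - μ ^ j) :=
    Finset.sum_congr rfl (fun n _ => by rw [hzpow])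
  -- geometric factorization
  have hfac : ∀ j : ℕ, (1 - μ ^ j) = (1 - μ) * ∑ i ∈ Finset.range j, μ ^ i := by
    intro j
    have := geom_sum_mul μ j
    linear_combination this
  -- tail vanishing
  have htail : ∀ n ∈ Finset.Ico 4 (r - 1),
      (μ⁻¹) ^ (n * (n + 2)) * (∑ k ∈ Finset.range (n + 1), μ ^ k) *
        ∏ j ∈ Finset.Icc (n + 2) (2 * n + 1), (1 - μ ^ j)
      = (1-μ)^4 * ((μ⁻¹) ^ (n * (n + 2)) * (∑ k ∈ Finset.range (n + 1), μ ^ k) *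
          ((1-μ)^(n-4) * ∏ j ∈ Finset.Icc (n + 2) (2 * n + 1),
            (∑ i ∈ Finset.range j, μ ^ i))) := by
    intro n hn
    rw [Finset.mem_Ico] at hn
    have hprod : (∏ j ∈ Finset.Icc (n + 2) (2 * n + 1), (1 - μ ^ j))
        = ((1-μ)^4 * (1-μ)^(n-4)) * ∏ j ∈ Finset.Icc (n + 2) (2 * n + 1),
            (∑ i ∈ Finset.range j, μ ^ i) := by
      rw [Finset.prod_congr rfl (fun j _ => hfac j), Finset.prod_mul_distrib,
        Finset.prod_const, Nat.card_Icc, ← pow_add]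
      congr 2
      omega
    rw [hprod]
    ring
  set E : ℂ := 1 + 5*μ + 15*μ^2 + 35*μ^3 + 69*μ^4 + 120*μ^5 + 189*μ^6 + 275*μ^7
      + 375*μ^8 + 485*μ^9 + 600*μ^10 + 715*μ^11 + 826*μ^12 + 931*μ^13 + 1030*μ^14
      - 15*μ^15 - 5*μ^16 - μ^17 with hE
  have hhead : ∑ n ∈ Finset.range 4, (μ⁻¹) ^ (n * (n + 2)) *
          (∑ k ∈ Finset.range (n + 1), μ ^ k) *
          ∏ j ∈ Finset.Icc (n + 2) (2 * n + 1), (1 - μ ^ j)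
      = 1 + 6*(1-μ) + 69*(1-μ)^2 + 1064*(1-μ)^3 + (1-μ)^4 * ((μ⁻¹)^15 * E) := by
    have e0 : Finset.Icc 2 1 = (∅ : Finset ℕ) := by decide
    have p1 : ∏ j ∈ Finset.Icc 3 3, (1 - μ^j) = (1-μ^3) := by
      rw [Finset.Icc_self, Finset.prod_singleton]
    have p2 : ∏ j ∈ Finset.Icc 4 5, (1 - μ^j) = (1-μ^4)*(1-μ^5) := by
      rw [show Finset.Icc 4 5 = {4,5} by decide, Finset.prod_insert (by decide),
        Finset.prod_singleton]
    have p3 : ∏ j ∈ Finset.Icc 5 7, (1 - μ^j) = (1-μ^5)*((1-μ^6)*(1-μ^7)) := by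
      rw [show Finset.Icc 5 7 = {5,6,7} by decide, Finset.prod_insert (by decide),
        Finset.prod_insert (by decide), Finset.prod_singleton]
    norm_num [Finset.sum_range_succ, e0, p1, p2, p3]
    rw [hE]
    field_simp
    ring
  refine ⟨(μ⁻¹)^15 * E + ∑ n ∈ Finset.Ico 4 (r-1),
      ((μ⁻¹) ^ (n * (n + 2)) * (∑ k ∈ Finset.range (n + 1), μ ^ k) *
          ((1-μ)^(n-4) * ∏ j ∈ Finset.Icc (n + 2) (2 * n + 1),
            (∑ i ∈ Finset.range j, μ ^ i))), ?_, ?_⟩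
  · refine Subring.add_mem R (Subring.mul_mem R (Subring.pow_mem R hinvR 15) ?_)
      (Subring.sum_mem R (fun n _ => ?_))
    · rw [hE]
      repeat
        first
        | exact hμR
        | exact hinvR
        | apply Subring.add_mem
        | apply Subring.sub_mem
        | apply Subring.mul_mem
        | apply Subring.pow_mem
        | apply Subring.one_mem
        | exact ofNat_mem R _
    · refine Subring.mul_mem R (Subring.mul_mem R (Subring.pow_mem R hinvR _)
        (Subring.sum_mem R (fun k _ => Subring.pow_mem R hμR _)))
        (Subring.mul_mem R (Subring.pow_mem R ?_ _)
          (Subring.prod_mem R (fun j _ => Subring.sum_mem R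
            (fun i _ => Subring.pow_mem R hμR _))))
      exact Subring.sub_mem R (Subring.one_mem R) hμR
  · rw [hsum_eq,
      show Finset.range (r-1) = Finset.Ico 0 (r-1) from Finset.range_eq_Ico _,
      ← Finset.sum_Ico_consecutive _ (by omega : (0:ℕ) ≤ 4) (by omega : 4 ≤ r - 1),
      show Finset.Ico 0 4 = Finset.range 4 by rw [Finset.range_eq_Ico],
      hhead, Finset.sum_congr rfl htail, ← Finset.mul_sum]
    ring

lemma pow_trunc (μ : ℂ) (w : ℕ) : ∃ g ∈ Subring.closure ({μ} : Set ℂ),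
    μ ^ w = 1 - (w.choose 1 : ℂ) * (1-μ) + (w.choose 2 : ℂ) * (1-μ)^2
      - (w.choose 3 : ℂ) * (1-μ)^3 + (1-μ)^4 * g := by
  induction w with
  | zero => exact ⟨0, Subring.zero_mem _, by norm_num⟩
  | succ w ih =>
    obtain ⟨g, hg, heq⟩ := ih
    have hμR : μ ∈ Subring.closure ({μ} : Set ℂ) := Subring.subset_closure rfl
    refine ⟨(w.choose 3 : ℂ) + μ * g, Subring.add_mem _ (natCast_mem _ _)
      (Subring.mul_mem _ hμR hg), ?_⟩
    have e1 : ((w+1).choose 1 : ℂ) = (w.choose 1 : ℂ) + 1 := by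
      rw [Nat.choose_succ_succ]; push_cast [Nat.choose_zero_right]; ring
    have e2 : ((w+1).choose 2 : ℂ) = (w.choose 1 : ℂ) + (w.choose 2 : ℂ) := by
      rw [Nat.choose_succ_succ]; push_cast; ring
    have e3 : ((w+1).choose 3 : ℂ) = (w.choose 2 : ℂ) + (w.choose 3 : ℂ) := by
      rw [Nat.choose_succ_succ]; push_cast; ring
    rw [pow_succ, heq, e1, e2, e3]
    ring

lemma choose2 (w : ℕ) : 2 * (w.choose 2 : ℤ) = w * (w - 1) := by
  induction w with
  | zero => norm_num
  | succ w ih =>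
    rw [Nat.choose_succ_succ]
    push_cast [Nat.choose_one_right]
    push_cast at ih
    ring_nf
    ring_nf at ih
    linarith [ih]

lemma choose3 (w : ℕ) : 6 * (w.choose 3 : ℤ) = w * (w - 1) * (w - 2) := by
  induction w with
  | zero => norm_num
  | succ w ih =>
    rw [Nat.choose_succ_succ]
    push_cast
    push_cast at ih
    have h2 := choose2 w
    push_cast at h2
    linear_combination ih + 3 * h2

lemma exists_poly {μ x : ℂ} (hx : x ∈ Subring.closure ({μ} : Set ℂ)) :
    ∃ p : Polynomial ℤ, Polynomial.aeval μ p = x := by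
  have h1 : x ∈ Algebra.adjoin ℤ ({μ} : Set ℂ) := by
    rw [Algebra.adjoin_int]; exact hx
  rw [Algebra.adjoin_singleton_eq_range_aeval] at h1
  exact h1

lemma cyclo_mod_p (p : ℕ) [Fact p.Prime] :
    cyclotomic p (ZMod p) = (X - 1) ^ (p - 1) := by
  have hp := (Fact.out : p.Prime)
  have h1 : cyclotomic p (ZMod p) * (X - 1) = X ^ p - 1 :=
    cyclotomic_prime_mul_X_sub_one (ZMod p) p
  have h2 : (X - 1 : (ZMod p)[X]) ^ p = X ^ p - 1 := by
    rw [sub_pow_char]; simp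
  have h3 : cyclotomic p (ZMod p) * (X - 1) = (X - 1) ^ (p - 1) * (X - 1) := by
    rw [h1, ← h2, ← pow_succ, Nat.sub_add_cancel hp.one_lt.le]
  have hX : (X - 1 : (ZMod p)[X]) ≠ 0 := by
    simpa using X_sub_C_ne_zero (1 : ZMod p)
  exact mul_right_cancel₀ hX h3

/-- The Brieskorn sphere `Σ(2,3,7)` criterion: for a prime `r ≥ 5`, `r ≠ 7` and
a primitive `r`-th root of unity `ζ`, the quantum invariant `τ_B` never
satisfies the congruence `τ_B ≡ ζ^v · conj(τ_B) (mod r)` in `ℤ[ζ]`. -/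
theorem brieskorn_sphere_not_r_periodic
    (r : ℕ) (hr : r.Prime) (hr5 : 5 ≤ r) (hr7 : r ≠ 7)
    (ζ : ℂ) (hζ : IsPrimitiveRoot ζ r) :
    ∀ v : ℤ, ¬ ∃ y ∈ Subring.closure ({ζ} : Set ℂ),
      (∑ n ∈ Finset.range (r - 1), ζ ^ (-((n : ℤ) * ((n : ℤ) + 2))) *
          (∑ k ∈ Finset.range (n + 1), ζ ^ k) *
          ∏ j ∈ Finset.Icc (n + 2) (2 * n + 1), (1 - ζ ^ j))
        - ζ ^ v * (starRingEnd ℂ)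
            (∑ n ∈ Finset.range (r - 1), ζ ^ (-((n : ℤ) * ((n : ℤ) + 2))) *
              (∑ k ∈ Finset.range (n + 1), ζ ^ k) *
              ∏ j ∈ Finset.Icc (n + 2) (2 * n + 1), (1 - ζ ^ j))
        = (r : ℂ) * y := by
  intro v
  rintro ⟨y, hyR, hEq⟩
  set R := Subring.closure ({ζ} : Set ℂ) with hRdef
  have hζR : ζ ∈ R := Subring.subset_closure rfl
  have hr0 : r ≠ 0 := by omega
  have hζ0 : ζ ≠ 0 := hζ.ne_zero hr0
  have hζr : ζ ^ r = 1 := hζ.pow_eq_one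
  have hinv : ζ⁻¹ = ζ ^ (r - 1) :=
    inv_eq_of_mul_eq_one_right (by
      rw [← pow_succ', Nat.sub_add_cancel (by omega)]; exact hζr)
  have hinvR : ζ⁻¹ ∈ R := by rw [hinv]; exact Subring.pow_mem R hζR _
  -- conjugation
  have hnorm : ‖ζ‖ = 1 := hζ.norm'_eq_one hr0
  have hconj : (starRingEnd ℂ) ζ = ζ⁻¹ := (RCLike.inv_eq_conj hnorm).symm
  have hconjτ : (starRingEnd ℂ)
      (∑ n ∈ Finset.range (r - 1), ζ ^ (-((n : ℤ) * ((n : ℤ) + 2))) *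
          (∑ k ∈ Finset.range (n + 1), ζ ^ k) *
          ∏ j ∈ Finset.Icc (n + 2) (2 * n + 1), (1 - ζ ^ j))
      = ∑ n ∈ Finset.range (r - 1), (ζ⁻¹) ^ (-((n : ℤ) * ((n : ℤ) + 2))) *
          (∑ k ∈ Finset.range (n + 1), (ζ⁻¹) ^ k) *
          ∏ j ∈ Finset.Icc (n + 2) (2 * n + 1), (1 - (ζ⁻¹) ^ j) := by
    simp [map_sum, map_mul, map_prod, map_sub, map_pow, map_zpow₀, hconj]
  -- expansions
  obtain ⟨g₁, hg₁, hτ⟩ := tau_exp r hr5 ζ hζ0 hζr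
  have hξ0 : ζ⁻¹ ≠ 0 := inv_ne_zero hζ0
  have hξr : (ζ⁻¹) ^ r = 1 := by rw [inv_pow, hζr, inv_one]
  obtain ⟨g₂, hg₂', hτξ⟩ := tau_exp r hr5 ζ⁻¹ hξ0 hξr
  have hg₂ : g₂ ∈ R := by
    refine Subring.closure_le.mpr ?_ hg₂'
    simp [hinvR]
  -- conj tau in powers of (1 - ζ)
  have hcτ : ∃ g₃ ∈ R,
      (∑ n ∈ Finset.range (r - 1), (ζ⁻¹) ^ (-((n : ℤ) * ((n : ℤ) + 2))) *
          (∑ k ∈ Finset.range (n + 1), (ζ⁻¹) ^ k) *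
          ∏ j ∈ Finset.Icc (n + 2) (2 * n + 1), (1 - (ζ⁻¹) ^ j))
      = 1 - 6*(1-ζ) + 63*(1-ζ)^2 - 932*(1-ζ)^3 + (1-ζ)^4 * g₃ := by
    refine ⟨(ζ⁻¹)^4 * g₂ + (ζ⁻¹)^3 * (-1064 - 995*ζ - 932*ζ^2), ?_, ?_⟩
    · repeat
        first
        | exact hζR
        | exact hinvR
        | exact hg₂
        | apply Subring.add_mem
        | apply Subring.sub_mem
        | apply Subring.neg_mem
        | apply Subring.mul_mem
        | apply Subring.pow_mem
        | apply Subring.one_mem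
        | exact ofNat_mem R _
    · rw [hτξ]
      have hu : ζ * ζ⁻¹ = 1 := mul_inv_cancel₀ hζ0
      linear_combination ((-2014) + (-1)*g₂ + (3336)*ζ⁻¹ + (4)*ζ⁻¹*g₂ + (-3261)*ζ⁻¹^2 + (-6)*ζ⁻¹^2*g₂ + (4)*ζ⁻¹^3*g₂ + (2676)*ζ + (-2014)*ζ*ζ⁻¹ + (-1)*ζ*ζ⁻¹*g₂ + (3336)*ζ*ζ⁻¹^2 + (4)*ζ*ζ⁻¹^2*g₂ + (-6)*ζ*ζ⁻¹^3*g₂ + (-2733)*ζ^2 + (2676)*ζ^2*ζ⁻¹ + (-2014)*ζ^2*ζ⁻¹^2 + (-1)*ζ^2*ζ⁻¹^2*g₂ + (4)*ζ^2*ζ⁻¹^3*g₂ + (932)*ζ^3 + (-2733)*ζ^3*ζ⁻¹ + (2676)*ζ^3*ζ⁻¹^2 + (-1)*ζ^3*ζ⁻¹^3*g₂ + (932)*ζ^4*ζ⁻¹ + (-2733)*ζ^4*ζ⁻¹^2 + (932)*ζ^5*ζ⁻¹^2) * hu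
  obtain ⟨g₃, hg₃, hcτeq⟩ := hcτ
  -- reduce ζ ^ v to a natural power
  set w : ℕ := (v % (r : ℤ)).toNat with hwdef
  have hvmod : (0:ℤ) ≤ v % (r:ℤ) := Int.emod_nonneg v (by exact_mod_cast hr0)
  have hzv : ζ ^ v = ζ ^ w := by
    have h1 : ζ ^ v = ζ ^ ((r:ℤ) * (v / (r:ℤ)) + v % (r:ℤ)) := by
      rw [Int.mul_ediv_add_emod]
    rw [h1, zpow_add₀ hζ0, zpow_mul, zpow_natCast, hζr, one_zpow, one_mul,
      show v % (r:ℤ) = (w:ℤ) from (Int.toNat_of_nonneg hvmod).symm, zpow_natCast]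
  obtain ⟨gw, hgw, hpw⟩ := pow_trunc ζ w
  -- the key equation
  set c1 : ℂ := (w.choose 1 : ℂ)
  set c2 : ℂ := (w.choose 2 : ℂ)
  set c3 : ℂ := (w.choose 3 : ℂ)
  set h : ℂ := 1 - ζ with hh
  set g₅ : ℂ := g₁ - ((1 - c1*h + c2*h^2 - c3*h^3) * g₃
      + gw * (1 - 6*h + 63*h^2 - 932*h^3) + h^4 * (gw * g₃))
      + (-(932*c1 + 63*c2 + 6*c3) + (932*c2 + 63*c3)*h - 932*c3*h^2) with hg₅def
  have hg₅ : g₅ ∈ R := by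
    rw [hg₅def]
    repeat
      first
      | exact hζR
      | exact hinvR
      | exact hg₁
      | exact hg₃
      | exact hgw
      | apply Subring.add_mem
      | apply Subring.sub_mem
      | apply Subring.neg_mem
      | apply Subring.mul_mem
      | apply Subring.pow_mem
      | apply Subring.one_mem
      | exact natCast_mem R _
      | exact ofNat_mem R _
  set a1 : ℤ := 12 + (w.choose 1 : ℤ) with ha1
  set a2 : ℤ := 6 - 6 * (w.choose 1 : ℤ) - (w.choose 2 : ℤ) with ha2
  set a3 : ℤ := 1996 + 63 * (w.choose 1 : ℤ) + 6 * (w.choose 2 : ℤ)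
      + (w.choose 3 : ℤ) with ha3
  have key : (a1:ℂ)*h + (a2:ℂ)*h^2 + (a3:ℂ)*h^3 + h^4 * g₅ = (r:ℂ) * y := by
    rw [← hEq, hconjτ, hcτeq, hτ, hzv, hpw, ha1, ha2, ha3, hg₅def]
    push_cast
    ring
  rw [hh] at key
  -- to polynomials
  obtain ⟨G, hG⟩ := exists_poly hg₅
  obtain ⟨Y, hY⟩ := exists_poly hyR
  set F : Polynomial ℤ := C a1 * (1 - X) + C a2 * (1 - X)^2 + C a3 * (1 - X)^3
      + (1 - X)^4 * G - C (r:ℤ) * Y with hF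
  have hF0 : aeval ζ F = 0 := by
    rw [hF]
    simp only [map_add, map_sub, map_mul, map_pow, map_one, aeval_C, aeval_X,
      algebraMap_int_eq, eq_intCast, map_intCast, hG, hY]
    push_cast
    linear_combination key
  have hdvd : cyclotomic r ℤ ∣ F := by
    have hmin : minpoly ℚ ζ ∣ F.map (algebraMap ℤ ℚ) :=
      minpoly.dvd ℚ ζ (by rwa [Polynomial.aeval_map_algebraMap])
    rw [← cyclotomic_eq_minpoly_rat hζ (by omega), ← map_cyclotomic_int r ℚ,
      algebraMap_int_eq] at hmin
    rwa [Polynomial.map_dvd_map _ Int.cast_injective (cyclotomic.monic r ℤ)] at hmin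
  obtain ⟨Q, hFQ⟩ := hdvd
  haveI : Fact r.Prime := ⟨hr⟩
  have hm := congrArg (Polynomial.map (Int.castRingHom (ZMod r))) hFQ
  rw [Polynomial.map_mul, map_cyclotomic_int, cyclo_mod_p r, hF] at hm
  simp only [Polynomial.map_add, Polynomial.map_sub, Polynomial.map_mul,
    Polynomial.map_pow, Polynomial.map_one, Polynomial.map_ofNat, map_C,
    Polynomial.map_X, Int.coe_castRingHom] at hm
  rw [show (((r:ℕ):ℤ) : ZMod r) = 0 by push_cast; exact ZMod.natCast_self r,
    Polynomial.C_0, zero_mul, sub_zero] at hm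
  set A1 : ZMod r := ((a1 : ℤ) : ZMod r) with hA1def
  set A2 : ZMod r := ((a2 : ℤ) : ZMod r) with hA2def
  set A3 : ZMod r := ((a3 : ℤ) : ZMod r) with hA3def
  have hdvd4 : (1 - X : (ZMod r)[X])^4 ∣
      C A1 * (1 - X) + C A2 * (1 - X)^2 + C A3 * (1 - X)^3 := by
    refine ⟨(X - 1)^(r-5) * Q.map (Int.castRingHom (ZMod r))
      - G.map (Int.castRingHom (ZMod r)), ?_⟩
    have hpows : ((X:(ZMod r)[X]) - 1)^(r-1) = (1 - X)^4 * (X - 1)^(r-5) := by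
      rw [show ((1:(ZMod r)[X]) - X)^4 = (X - 1)^4 by ring, ← pow_add]
      congr 1
      omega
    rw [hpows] at hm
    linear_combination hm
  -- apply X ↦ 1 - X
  have hdvd4' : (X : (ZMod r)[X])^4 ∣ C A1 * X + C A2 * X^2 + C A3 * X^3 := by
    have hmap := map_dvd (aeval (R := ZMod r) (1 - X : (ZMod r)[X])) hdvd4
    simp only [map_add, map_sub, map_mul, map_pow, map_one, aeval_C, aeval_X] at hmap
    simpa using hmap
  have hP0 : (C A1 * X + C A2 * X^2 + C A3 * X^3 : (ZMod r)[X]) = 0 := by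
    refine Polynomial.eq_zero_of_dvd_of_degree_lt hdvd4' ?_
    rw [degree_X_pow]
    refine lt_of_le_of_lt ?_ (by norm_num : (3:WithBot ℕ) < 4)
    compute_degree
  have hA1 : A1 = 0 := by
    have := congrArg (fun p => Polynomial.coeff p 1) hP0
    simpa [coeff_C_mul, coeff_X, coeff_X_pow] using this
  have hA3 : A3 = 0 := by
    have := congrArg (fun p => Polynomial.coeff p 3) hP0
    simpa [coeff_C_mul, coeff_X, coeff_X_pow] using this
  -- final arithmetic
  have h2 := congrArg (Int.cast : ℤ → ZMod r) (choose2 w)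
  have h3 := congrArg (Int.cast : ℤ → ZMod r) (choose3 w)
  have hA1' : ((12 : ZMod r) + ((w:ℤ) : ZMod r)) = 0 := by
    rw [← hA1]
    show _ = ((a1 : ℤ) : ZMod r)
    rw [ha1]
    push_cast [Nat.choose_one_right]
    ring
  have hA3' : ((1996 : ZMod r) + 63*((w:ℤ):ZMod r) + 6*(((w.choose 2 : ℤ)):ZMod r)
      + (((w.choose 3 : ℤ)):ZMod r)) = 0 := by
    rw [← hA3]
    show _ = ((a3 : ℤ) : ZMod r)
    rw [ha3]
    push_cast [Nat.choose_one_right]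
    ring
  push_cast at h2 h3 hA1' hA3'
  have h8064 : ((8064 : ℤ) : ZMod r) = 0 := by
    push_cast
    linear_combination (-((w:ZMod r)^2 + 3*(w:ZMod r) + 326)) * hA1'
      - 18 * h2 - h3 + 6 * hA3'
  have hdvd8064 : (r : ℕ) ∣ 8064 := by
    have := (ZMod.intCast_zmod_eq_zero_iff_dvd 8064 r).mp h8064
    exact_mod_cast this
  have h8064eq : (8064 : ℕ) = 2^7 * (3^2 * 7) := by norm_num
  rw [h8064eq] at hdvd8064
  rcases (Nat.Prime.dvd_mul hr).mp hdvd8064 with hc | hc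
  · have := Nat.le_of_dvd (by norm_num) (hr.dvd_of_dvd_pow hc)
    omega
  · rcases (Nat.Prime.dvd_mul hr).mp hc with hc' | hc'
    · have := Nat.le_of_dvd (by norm_num) (hr.dvd_of_dvd_pow hc')
      omega
    · have := (Nat.prime_dvd_prime_iff_eq hr (by norm_num)).mp hc'
      omega
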